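/- Let R be an integral domain, n a natural number, and ξ ∈ R an element with ξ^n = 1 and ξ^j ≠ 1 for all 0 < j < n. Then for all k with 0 < k < n, the Gaussian binomial coefficient evaluated at ξ vanishes: binom(n,k)_ξ = 0 in R. -/

import Mathlib

/-!
Vanishing of Gaussian binomial coefficients at primitive roots of unity in an
integral domain.

The Gaussian binomial coefficient is characterized by its defining formula
`binom(n,k)_q = [n]!_q / ([n-k]!_q ⬝ [k]!_q)` in the fraction field `ℚ(q)` of `ℤ[q]`;
we quantify over any family `B : ℕ → ℕ → ℤ[q]` satisfying this property, and
`binom(n,k)_ξ` is the image of `B n k` under the ring homomorphism `ℤ[q] → R`, `q ↦ ξ`.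
-/

/-- The image of the variable `q` in the fraction field of `ℤ[q]`. -/
noncomputable def qq : FractionRing (Polynomial ℤ) :=
  algebraMap (Polynomial ℤ) (FractionRing (Polynomial ℤ)) Polynomial.X

/-- The q-bracket `[n]_q = 1 + q + ... + q^(n-1)`. -/
noncomputable def qBracket (n : ℕ) : FractionRing (Polynomial ℤ) :=
  ∑ i ∈ Finset.range n, qq ^ i

/-- The q-factorial `[n]!_q = [1]_q ⬝ [2]_q ⬝ ... ⬝ [n]_q`. -/
noncomputable def qFactorial (n : ℕ) : FractionRing (Polynomial ℤ) :=
  ∏ i ∈ Finset.range n, qBracket (i + 1)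

open Polynomial

/-- Let `R` be an integral domain, `n` a natural number and `ξ ∈ R` an element with
`ξ^n = 1` and `ξ^j ≠ 1` for all `0 < j < n`.  Then for all `0 < k < n` the Gaussian
binomial coefficient evaluated at `ξ` vanishes: `binom(n,k)_ξ = 0` in `R`. -/
theorem qBinom_eval_primitiveRoot_domain (B : ℕ → ℕ → Polynomial ℤ)
    (hB : ∀ n k : ℕ, k ≤ n →
      algebraMap (Polynomial ℤ) (FractionRing (Polynomial ℤ)) (B n k) =
        qFactorial n / (qFactorial (n - k) * qFactorial k))
    (R : Type*) [CommRing R] [IsDomain R]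
    (n : ℕ) (ξ : R) (hξ1 : ξ ^ n = 1) (hξ2 : ∀ j : ℕ, 0 < j → j < n → ξ ^ j ≠ 1)
    (k : ℕ) (hk0 : 0 < k) (hkn : k < n) :
    Polynomial.aeval ξ (B n k) = 0 := by
  set φ := algebraMap (Polynomial ℤ) (FractionRing (Polynomial ℤ)) with hφ
  have hinj : Function.Injective φ := IsFractionRing.injective _ _
  set s : ℕ → Polynomial ℤ := fun m => ∑ j ∈ Finset.range m, X ^ j with hs
  set p : ℕ → Polynomial ℤ := fun m => ∏ i ∈ Finset.range m, s (i + 1) with hp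
  have hps : ∀ m, φ (p m) = qFactorial m := by
    intro m
    simp [hφ, hp, hs, qFactorial, qBracket, qq, map_prod, map_sum, map_pow]
  have hsne : ∀ m, 0 < m → s m ≠ 0 := by
    intro m hm h
    have := congrArg (Polynomial.eval (1 : ℤ)) h
    simp [hs] at this
    omega
  have hpne : ∀ m, p m ≠ 0 := by
    intro m
    refine Finset.prod_ne_zero_iff.mpr fun i _ => hsne _ (Nat.succ_pos i)
  -- key polynomial identity
  have hkey : B n k * (p (n - k) * p k) = p n := by
    apply hinj
    rw [map_mul, map_mul, hps, hps, hps, hB n k hkn.le]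
    have h1 : qFactorial (n - k) ≠ 0 := by rw [← hps]; simpa using fun h => hpne _ (hinj (by simpa using h))
    have h2 : qFactorial k ≠ 0 := by rw [← hps]; simpa using fun h => hpne _ (hinj (by simpa using h))
    field_simp
  set Φ : Polynomial ℤ := cyclotomic n ℤ with hΦ
  have hn0 : 0 < n := hk0.trans hkn
  have hprime : Prime Φ := (cyclotomic.irreducible hn0).prime
  -- complex primitive root argument
  have hdvd_pow : ∀ m : ℕ, Φ ∣ X ^ m - 1 → n ∣ m := by
    intro m hd
    have hζ : IsPrimitiveRoot (Complex.exp (2 * Real.pi * Complex.I / n)) n :=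
      Complex.isPrimitiveRoot_exp n hn0.ne'
    set ζ := Complex.exp (2 * Real.pi * Complex.I / n)
    have hΦζ : aeval ζ Φ = 0 := by
      have := hζ.isRoot_cyclotomic hn0
      rw [← map_cyclotomic_int n ℂ] at this
      simpa [hΦ, aeval_def, eval₂_eq_eval_map, IsRoot] using this
    obtain ⟨c, hc⟩ := hd
    have : ζ ^ m = 1 := by
      have := congrArg (aeval ζ) hc
      simp [hΦζ] at this
      linear_combination this
    exact hζ.dvd_of_pow_eq_one _ this
  have hΦs : ∀ m, 0 < m → Φ ∣ s m → n ∣ m := by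
    intro m hm hd
    apply hdvd_pow
    have : s m * (X - 1) = X ^ m - 1 := geom_sum_mul _ _
    exact this ▸ hd.mul_right _
  have hΦp : ∀ m, m < n → ¬ Φ ∣ p m := by
    intro m hm hd
    obtain ⟨i, hi, hdi⟩ := (hprime.dvd_finset_prod_iff _).mp hd
    have := hΦs (i + 1) (Nat.succ_pos i) hdi
    have : n ≤ i + 1 := Nat.le_of_dvd (Nat.succ_pos i) this
    simp [Finset.mem_range] at hi
    omega
  have hΦpn : Φ ∣ p n := by
    have hdv : Φ ∣ s n * (X - 1) := by
      rw [hs]; simp only []; rw [geom_sum_mul]; exact cyclotomic.dvd_X_pow_sub_one n ℤ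
    have h1 : Φ ∣ s n := by
      rcases (hprime.dvd_mul).mp hdv with h | h
      · exact h
      · exfalso
        have h1 := hdvd_pow 1 (by rw [pow_one]; exact h)
        have := Nat.le_of_dvd one_pos h1
        omega
    have hmem : n - 1 ∈ Finset.range n := Finset.mem_range.mpr (by omega)
    have h2 := Finset.dvd_prod_of_mem (fun i => s (i + 1)) hmem
    have h3 : n - 1 + 1 = n := by omega
    exact h1.trans (by simpa only [h3] using h2)
  have hΦB : Φ ∣ B n k := by
    rcases hprime.dvd_mul.mp (hkey ▸ hΦpn) with h | h
    · exact h
    · rcases hprime.dvd_mul.mp h with h | h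
      · exact absurd h (hΦp _ (by omega))
      · exact absurd h (hΦp _ hkn)
  -- conclude
  obtain ⟨c, hc⟩ := hΦB
  have hprim : IsPrimitiveRoot ξ n := by
    refine ⟨hξ1, fun l hl => ?_⟩
    rcases Nat.eq_zero_or_pos (l % n) with h | h
    · exact Nat.dvd_of_mod_eq_zero h
    · exfalso
      apply hξ2 (l % n) h (Nat.mod_lt _ hn0)
      have h2 : ξ ^ l = (ξ ^ n) ^ (l / n) * ξ ^ (l % n) := by
        rw [← pow_mul, ← pow_add]; congr 1; exact (Nat.div_add_mod l n).symm
      rw [h2, hξ1, one_pow, one_mul] at hl; exact hl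
  have hΦξ : aeval ξ Φ = 0 := by
    have := hprim.isRoot_cyclotomic hn0
    rw [← map_cyclotomic_int n R] at this
    simpa [hΦ, aeval_def, eval₂_eq_eval_map, IsRoot] using this
  rw [hc, map_mul, hΦξ, zero_mul]
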